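/- Let β > 0 and U = (ρ, m, E) ∈ 𝒢 with pressure tensor p = p(U) (entries p₁₁, p₁₂, p₂₂). If the real number δ̃₁ satisfies |δ̃₁| ≤ min{√(p₁₁/ρ), √(det(p)/(ρ p₂₂))}·β, then the state Ũ₁ := (βρ, βm + δ̃₁(ρ, 0), βE + δ̃₁·[[m₁, m₂/2],[m₂/2, 0]]) belongs to 𝒢̄. Likewise, if δ̃₂ satisfies |δ̃₂| ≤ min{√(p₂₂/ρ), √(det(p)/(ρ p₁₁))}·β, then Ũ₂ := (βρ, βm + δ̃₂(0, ρ), βE + δ̃₂·[[0, m₁/2],[m₁/2, m₂]]) belongs to 𝒢̄. -/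

import Mathlib

open Matrix

noncomputable section

/-- A state is a triple `(ρ, m, E)` with `ρ : ℝ`, `m : ℝ²`, `E` a 2×2 real matrix. -/
abbrev Mat2 := Matrix (Fin 2) (Fin 2) ℝ

/-- The pressure tensor `p(U) = 2E - (1/ρ) m mᵀ`. -/
def pTensor (ρ : ℝ) (m : Fin 2 → ℝ) (E : Mat2) : Mat2 :=
  (2 : ℝ) • E - ρ⁻¹ • vecMulVec m m

/-- `φ(U; z, u*) = zᵀEz − (m·z)(u*·z) + (ρ/2)(u*·z)²`. -/
def phi (ρ : ℝ) (m : Fin 2 → ℝ) (E : Mat2) (z u : Fin 2 → ℝ) : ℝ :=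
  z ⬝ᵥ (E *ᵥ z) - (m ⬝ᵥ z) * (u ⬝ᵥ z) + (ρ / 2) * (u ⬝ᵥ z) ^ 2

/-- The admissible set `𝒢`: states with positive density and positive definite pressure tensor. -/
def G : Set (ℝ × (Fin 2 → ℝ) × Mat2) :=
  {U | 0 < U.1 ∧ (pTensor U.1 U.2.1 U.2.2).PosDef}

/-- The closed admissible set `𝒢̄`: states (so `E` symmetric) with `ρ ≥ 0` and
`φ(U; z, u*) ≥ 0` for all `z, u*`. -/
def Gbar : Set (ℝ × (Fin 2 → ℝ) × Mat2) :=
  {U | 0 ≤ U.1 ∧ U.2.2.IsSymm ∧ ∀ z u : Fin 2 → ℝ, 0 ≤ phi U.1 U.2.1 U.2.2 z u}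

lemma key_poly (β ρ p00 p01 p22 δ z0 z1 a s : ℝ)
    (hβ : 0 < β) (hρ : 0 < ρ) (hp22 : 0 < p22)
    (h2 : δ^2*ρ*p22 ≤ (p00*p22 - p01^2)*β^2) :
    0 ≤ (β/2)*(p00*z0^2+2*p01*z0*z1+p22*z1^2) + (β/(2*ρ))*(a - ρ*s)^2
      + δ*z0*(a - ρ*s) := by
  have hc : (0:ℝ) < 2*β*ρ*p22 := by positivity
  have H : 0 ≤ β^2*ρ*p22*(p00*z0^2+2*p01*z0*z1+p22*z1^2) + β^2*p22*(a-ρ*s)^2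
      + 2*β*ρ*p22*(δ*z0*(a-ρ*s)) := by
    nlinarith [mul_nonneg hp22.le (sq_nonneg (β*(a-ρ*s) + δ*ρ*z0)),
      mul_nonneg (mul_nonneg (sq_nonneg β) hρ.le) (sq_nonneg (p22*z1+p01*z0)),
      mul_le_mul_of_nonneg_left h2 (mul_nonneg hρ.le (sq_nonneg z0))]
  have heq : (β/2)*(p00*z0^2+2*p01*z0*z1+p22*z1^2) + (β/(2*ρ))*(a - ρ*s)^2
      + δ*z0*(a - ρ*s)
      = (β^2*ρ*p22*(p00*z0^2+2*p01*z0*z1+p22*z1^2) + β^2*p22*(a-ρ*s)^2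
      + 2*β*ρ*p22*(δ*z0*(a-ρ*s))) / (2*β*ρ*p22) := by
    field_simp
  rw [heq]; exact div_nonneg H hc.le

lemma pTensor_apply (ρ : ℝ) (m : Fin 2 → ℝ) (E : Mat2) (i j : Fin 2) :
    pTensor ρ m E i j = 2 * E i j - ρ⁻¹ * (m i * m j) := by
  simp [pTensor, vecMulVec, Matrix.sub_apply, Matrix.smul_apply]

lemma phi_eval (ρ' : ℝ) (m' : Fin 2 → ℝ) (E' : Mat2) (z u : Fin 2 → ℝ) :
    phi ρ' m' E' z u = (z 0 * (E' 0 0 * z 0 + E' 0 1 * z 1)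
      + z 1 * (E' 1 0 * z 0 + E' 1 1 * z 1))
      - (m' 0 * z 0 + m' 1 * z 1) * (u 0 * z 0 + u 1 * z 1)
      + (ρ'/2)*(u 0 * z 0 + u 1 * z 1)^2 := by
  simp [phi, Matrix.mulVec, dotProduct, Fin.sum_univ_two]

/-- Lemma 2.4 of the paper: perturbed states `Ũ₁, Ũ₂` stay in the closed admissible set. -/
theorem perturbed_states_mem_closure (β : ℝ) (hβ : 0 < β)
    (ρ : ℝ) (m : Fin 2 → ℝ) (E : Mat2) (hE : E.IsSymm) (hU : (ρ, m, E) ∈ G)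
    (δ1 δ2 : ℝ)
    (h1 : |δ1| ≤ min (Real.sqrt ((pTensor ρ m E) 0 0 / ρ))
        (Real.sqrt ((pTensor ρ m E).det / (ρ * (pTensor ρ m E) 1 1))) * β)
    (h2 : |δ2| ≤ min (Real.sqrt ((pTensor ρ m E) 1 1 / ρ))
        (Real.sqrt ((pTensor ρ m E).det / (ρ * (pTensor ρ m E) 0 0))) * β) :
    (β * ρ, β • m + δ1 • ![ρ, 0], β • E + δ1 • !![m 0, m 1 / 2; m 1 / 2, 0]) ∈ Gbar ∧
    (β * ρ, β • m + δ2 • ![0, ρ], β • E + δ2 • !![0, m 0 / 2; m 0 / 2, m 1]) ∈ Gbar := by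
  obtain ⟨hρ, hP⟩ := hU
  have hE10 : E 1 0 = E 0 1 := by
    have := congrFun (congrFun hE 0) 1
    simpa [Matrix.transpose_apply] using this
  have hp00 : 0 < (pTensor ρ m E) 0 0 := by
    have := hP.diag_pos (i := 0)
    simpa using this
  have hp22 : 0 < (pTensor ρ m E) 1 1 := by
    have := hP.diag_pos (i := 1)
    simpa using this
  have hsymm : (pTensor ρ m E) 1 0 = (pTensor ρ m E) 0 1 := by
    rw [pTensor_apply, pTensor_apply, hE10]; ring
  have hdetv : (pTensor ρ m E).det
      = (pTensor ρ m E) 0 0 * (pTensor ρ m E) 1 1 - ((pTensor ρ m E) 0 1)^2 := by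
    rw [Matrix.det_fin_two, hsymm]; ring
  have hdet : 0 < (pTensor ρ m E).det := hP.det_pos
  set p00 := (pTensor ρ m E) 0 0 with hP00
  set p01 := (pTensor ρ m E) 0 1 with hP01
  set p22 := (pTensor ρ m E) 1 1 with hP22
  -- squared bounds
  have hb1 : δ1^2 * ρ * p22 ≤ (p00*p22 - p01^2) * β^2 := by
    have hle : |δ1| ≤ Real.sqrt ((pTensor ρ m E).det / (ρ * p22)) * β :=
      le_trans h1 (by gcongr; exact min_le_right _ _)
    have hx : (0:ℝ) ≤ (pTensor ρ m E).det / (ρ * p22) := by positivity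
    have hsq : δ1^2 ≤ (pTensor ρ m E).det / (ρ * p22) * β^2 := by
      have := mul_le_mul hle hle (abs_nonneg _) (by positivity)
      rw [abs_mul_abs_self] at this
      nlinarith [Real.mul_self_sqrt hx]
    have hR : (pTensor ρ m E).det / (ρ * p22) * β^2 * (ρ * p22)
        = (p00*p22 - p01^2) * β^2 := by
      rw [hdetv]; field_simp; all_goals ring
    have := mul_le_mul_of_nonneg_right hsq (le_of_lt (by positivity : (0:ℝ) < ρ * p22))
    rw [hR] at this; linarith
  have hb2 : δ2^2 * ρ * p00 ≤ (p22*p00 - p01^2) * β^2 := by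
    have hle : |δ2| ≤ Real.sqrt ((pTensor ρ m E).det / (ρ * p00)) * β :=
      le_trans h2 (by gcongr; exact min_le_right _ _)
    have hx : (0:ℝ) ≤ (pTensor ρ m E).det / (ρ * p00) := by positivity
    have hsq : δ2^2 ≤ (pTensor ρ m E).det / (ρ * p00) * β^2 := by
      have := mul_le_mul hle hle (abs_nonneg _) (by positivity)
      rw [abs_mul_abs_self] at this
      nlinarith [Real.mul_self_sqrt hx]
    have hR : (pTensor ρ m E).det / (ρ * p00) * β^2 * (ρ * p00)
        = (p22*p00 - p01^2) * β^2 := by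
      rw [hdetv]; field_simp; all_goals ring
    have := mul_le_mul_of_nonneg_right hsq (le_of_lt (by positivity : (0:ℝ) < ρ * p00))
    rw [hR] at this; linarith
  have hp00v : p00 = 2 * E 0 0 - ρ⁻¹ * (m 0 * m 0) := pTensor_apply ..
  have hp01v : p01 = 2 * E 0 1 - ρ⁻¹ * (m 0 * m 1) := pTensor_apply ..
  have hp22v : p22 = 2 * E 1 1 - ρ⁻¹ * (m 1 * m 1) := pTensor_apply ..
  constructor
  · refine ⟨by positivity, ?_, ?_⟩
    · unfold Matrix.IsSymm
      rw [Matrix.transpose_add, Matrix.transpose_smul, Matrix.transpose_smul, hE]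
      congr 1
      rw [show (!![m 0, m 1 / 2; m 1 / 2, 0] : Mat2)ᵀ = !![m 0, m 1 / 2; m 1 / 2, 0] from by
        ext i j; fin_cases i <;> fin_cases j <;> simp]
    · intro z u
      rw [phi_eval]
      have key := key_poly β ρ p00 p01 p22 δ1 (z 0) (z 1)
        (m 0 * z 0 + m 1 * z 1) (u 0 * z 0 + u 1 * z 1) hβ hρ hp22 hb1
      rw [hp00v, hp01v, hp22v] at key
      have heq : (z 0 * ((β • E + δ1 • !![m 0, m 1 / 2; m 1 / 2, 0]) 0 0 * z 0
            + (β • E + δ1 • !![m 0, m 1 / 2; m 1 / 2, 0]) 0 1 * z 1)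
          + z 1 * ((β • E + δ1 • !![m 0, m 1 / 2; m 1 / 2, 0]) 1 0 * z 0
            + (β • E + δ1 • !![m 0, m 1 / 2; m 1 / 2, 0]) 1 1 * z 1))
          - ((β • m + δ1 • ![ρ, 0]) 0 * z 0 + (β • m + δ1 • ![ρ, 0]) 1 * z 1)
            * (u 0 * z 0 + u 1 * z 1)
          + (β * ρ / 2) * (u 0 * z 0 + u 1 * z 1)^2
          = (β/2)*((2 * E 0 0 - ρ⁻¹ * (m 0 * m 0))*(z 0)^2
              + 2*(2 * E 0 1 - ρ⁻¹ * (m 0 * m 1))*(z 0)*(z 1)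
              + (2 * E 1 1 - ρ⁻¹ * (m 1 * m 1))*(z 1)^2)
            + (β/(2*ρ))*((m 0 * z 0 + m 1 * z 1) - ρ*(u 0 * z 0 + u 1 * z 1))^2
            + δ1*(z 0)*((m 0 * z 0 + m 1 * z 1) - ρ*(u 0 * z 0 + u 1 * z 1)) := by
        simp only [Matrix.add_apply, Matrix.smul_apply, Pi.add_apply, Pi.smul_apply,
          Matrix.cons_val_zero, Matrix.cons_val_one, Matrix.head_cons, Matrix.head_fin_const,
          Matrix.cons_val', Matrix.empty_val', Matrix.cons_val_fin_one, smul_eq_mul, hE10, Matrix.of_apply]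
        field_simp
        ring
      rw [heq]; exact key
  · refine ⟨by positivity, ?_, ?_⟩
    · unfold Matrix.IsSymm
      rw [Matrix.transpose_add, Matrix.transpose_smul, Matrix.transpose_smul, hE]
      congr 1
      rw [show (!![0, m 0 / 2; m 0 / 2, m 1] : Mat2)ᵀ = !![0, m 0 / 2; m 0 / 2, m 1] from by
        ext i j; fin_cases i <;> fin_cases j <;> simp]
    · intro z u
      rw [phi_eval]
      have key := key_poly β ρ p22 p01 p00 δ2 (z 1) (z 0)
        (m 0 * z 0 + m 1 * z 1) (u 0 * z 0 + u 1 * z 1) hβ hρ hp00 hb2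
      rw [hp00v, hp01v, hp22v] at key
      have heq : (z 0 * ((β • E + δ2 • !![0, m 0 / 2; m 0 / 2, m 1]) 0 0 * z 0
            + (β • E + δ2 • !![0, m 0 / 2; m 0 / 2, m 1]) 0 1 * z 1)
          + z 1 * ((β • E + δ2 • !![0, m 0 / 2; m 0 / 2, m 1]) 1 0 * z 0
            + (β • E + δ2 • !![0, m 0 / 2; m 0 / 2, m 1]) 1 1 * z 1))
          - ((β • m + δ2 • ![0, ρ]) 0 * z 0 + (β • m + δ2 • ![0, ρ]) 1 * z 1)
            * (u 0 * z 0 + u 1 * z 1)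
          + (β * ρ / 2) * (u 0 * z 0 + u 1 * z 1)^2
          = (β/2)*((2 * E 1 1 - ρ⁻¹ * (m 1 * m 1))*(z 1)^2
              + 2*(2 * E 0 1 - ρ⁻¹ * (m 0 * m 1))*(z 1)*(z 0)
              + (2 * E 0 0 - ρ⁻¹ * (m 0 * m 0))*(z 0)^2)
            + (β/(2*ρ))*((m 0 * z 0 + m 1 * z 1) - ρ*(u 0 * z 0 + u 1 * z 1))^2
            + δ2*(z 1)*((m 0 * z 0 + m 1 * z 1) - ρ*(u 0 * z 0 + u 1 * z 1)) := by
        simp only [Matrix.add_apply, Matrix.smul_apply, Pi.add_apply, Pi.smul_apply,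
          Matrix.cons_val_zero, Matrix.cons_val_one, Matrix.head_cons, Matrix.head_fin_const,
          Matrix.cons_val', Matrix.empty_val', Matrix.cons_val_fin_one, smul_eq_mul, hE10, Matrix.of_apply]
        field_simp
        ring
      rw [heq]; exact key
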